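/- arXiv:0901.4888 — 2 statements merged into one kernel-verified Lean document; each statement's English description precedes it below -/
import Mathlib

section
/- Let L be a bounded distributive lattice, n ≥ 1, and let f : Lⁿ → L be an order-preserving function. Then f is a lattice polynomial function if and only if: for every function g obtained from f by substituting constants for variables, the diagonal δ_g preserves ∧ and ∨, and δ_f preserves ∧ and ∨, and f satisfies condition (V), its dual condition (V*), and condition (I). -/
open Classical

variable {L : Type*}

section Defs

variable [DistribLattice L] [BoundedOrder L]

/-- The ternary median term. -/
def med (x y z : L) : L := (x ⊔ y) ⊓ (x ⊔ z) ⊓ (y ⊔ z)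

/-- Lattice polynomial functions of arity `n`: the smallest class of functions
`(Fin n → L) → L` containing projections and constants and closed under
pointwise binary meets and joins. -/
inductive IsLatticePolynomial {n : ℕ} : ((Fin n → L) → L) → Prop
  | proj (k : Fin n) : IsLatticePolynomial fun x => x k
  | const (c : L) : IsLatticePolynomial fun _ => c
  | inf {f g : (Fin n → L) → L} :
      IsLatticePolynomial f → IsLatticePolynomial g →
      IsLatticePolynomial fun x => f x ⊓ g x
  | sup {f g : (Fin n → L) → L} :
      IsLatticePolynomial f → IsLatticePolynomial g →
      IsLatticePolynomial fun x => f x ⊔ g x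

/-- Unary lattice polynomial functions: the smallest class of functions `L → L`
containing the identity and constants and closed under pointwise binary meets
and joins. -/
inductive IsUnaryLatticePolynomial : (L → L) → Prop
  | id : IsUnaryLatticePolynomial fun x : L => x
  | const (c : L) : IsUnaryLatticePolynomial fun _ => c
  | inf {f g : L → L} :
      IsUnaryLatticePolynomial f → IsUnaryLatticePolynomial g →
      IsUnaryLatticePolynomial fun x => f x ⊓ g x
  | sup {f g : L → L} :
      IsUnaryLatticePolynomial f → IsUnaryLatticePolynomial g →
      IsUnaryLatticePolynomial fun x => f x ⊔ g x

/-- `h : L → L` preserves binary meets. -/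
def PreservesInf (h : L → L) : Prop := ∀ x y : L, h (x ⊓ y) = h x ⊓ h y

/-- `h : L → L` preserves binary joins. -/
def PreservesSup (h : L → L) : Prop := ∀ x y : L, h (x ⊔ y) = h x ⊔ h y

/-- Condition (H): `f(x ∧ c̄) = f(x) ∧ c` for all `c ∈ [f(0̄), f(1̄)]`. -/
def CondH {n : ℕ} (f : (Fin n → L) → L) : Prop :=
  ∀ (x : Fin n → L) (c : L), f (fun _ => ⊥) ≤ c → c ≤ f (fun _ => ⊤) →
    (f fun i => x i ⊓ c) = f x ⊓ c

/-- Condition (H*), the dual of (H): `f(x ∨ c̄) = f(x) ∨ c` for all `c ∈ [f(0̄), f(1̄)]`. -/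
def CondHDual {n : ℕ} (f : (Fin n → L) → L) : Prop :=
  ∀ (x : Fin n → L) (c : L), f (fun _ => ⊥) ≤ c → c ≤ f (fun _ => ⊤) →
    (f fun i => x i ⊔ c) = f x ⊔ c

/-- Condition (V): `f(x) = f(x ∧ c̄) ∨ f([x]_c)` for all `c ∈ [f(0̄), f(1̄)]`,
where the `i`-th component of `[x]_c` is `0` if `x i ≤ c`, and `x i` otherwise. -/
def CondV {n : ℕ} (f : (Fin n → L) → L) : Prop :=
  ∀ (x : Fin n → L) (c : L), f (fun _ => ⊥) ≤ c → c ≤ f (fun _ => ⊤) →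
    f x = (f fun i => x i ⊓ c) ⊔ (f fun i => if x i ≤ c then ⊥ else x i)

/-- Condition (V*), the dual of (V): `f(x) = f(x ∨ c̄) ∧ f([x]^c)` for all
`c ∈ [f(0̄), f(1̄)]`, where the `i`-th component of `[x]^c` is `1` if `c ≤ x i`,
and `x i` otherwise. -/
def CondVDual {n : ℕ} (f : (Fin n → L) → L) : Prop :=
  ∀ (x : Fin n → L) (c : L), f (fun _ => ⊥) ≤ c → c ≤ f (fun _ => ⊤) →
    f x = (f fun i => x i ⊔ c) ⊓ (f fun i => if c ≤ x i then ⊤ else x i)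

/-- Condition (I): `f(c̄) = c` for all `c ∈ [f(0̄), f(1̄)]`. -/
def CondI {n : ℕ} (f : (Fin n → L) → L) : Prop :=
  ∀ c : L, f (fun _ => ⊥) ≤ c → c ≤ f (fun _ => ⊤) → f (fun _ => c) = c

/-- A subset `S` of `L` is convex if `a ≤ b ≤ c` with `a, c ∈ S` implies `b ∈ S`. -/
def IsConvexSubset (S : Set L) : Prop :=
  ∀ ⦃a b c : L⦄, a ∈ S → c ∈ S → a ≤ b → b ≤ c → b ∈ S

/-- For every function `g = f_K^a` obtained from `f` by substituting constants for
variables (including `K = ∅`, i.e. `g = f`), the diagonal `δ_g` preserves binary meets.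
Here `δ_{f_K^a}(x) = f(y)` where `y i = a i` for `i ∈ K` and `y i = x` otherwise. -/
def DiagSubstPreservesInf {n : ℕ} (f : (Fin n → L) → L) : Prop :=
  ∀ (K : Set (Fin n)) (a : Fin n → L) (x y : L),
    (f fun i => if i ∈ K then a i else x ⊓ y) =
      (f fun i => if i ∈ K then a i else x) ⊓ (f fun i => if i ∈ K then a i else y)

/-- For every function `g = f_K^a` obtained from `f` by substituting constants for
variables (including `K = ∅`, i.e. `g = f`), the diagonal `δ_g` preserves binary joins. -/
def DiagSubstPreservesSup {n : ℕ} (f : (Fin n → L) → L) : Prop :=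
  ∀ (K : Set (Fin n)) (a : Fin n → L) (x y : L),
    (f fun i => if i ∈ K then a i else x ⊔ y) =
      (f fun i => if i ∈ K then a i else x) ⊔ (f fun i => if i ∈ K then a i else y)

end Defs

section Bwd

open Finset

variable [DistribLattice L] [BoundedOrder L] {n : ℕ} {f : (Fin n → L) → L}

/-- Lower one-coordinate estimate, from (V*) and (I). -/
private lemma low1 (hf : Monotone f) (hvd : CondVDual f) (hi : CondI f)
    (x : Fin n → L) (k : Fin n) (c : L)
    (h1 : f (fun _ => ⊥) ≤ c) (h2 : c ≤ f (fun _ => ⊤)) :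
    f (fun i => if i = k then ⊤ else x i) ⊓ c ≤ f (fun i => if i = k then c else x i) := by
  have hy := hvd (fun i => if i = k then c else x i) c h1 h2
  rw [hy]
  refine le_inf ?_ ?_
  · refine inf_le_of_right_le ?_
    calc c = f (fun _ => c) := (hi c h1 h2).symm
      _ ≤ _ := hf fun i => le_sup_right
  · refine inf_le_of_left_le (hf fun i => ?_)
    by_cases hik : i = k
    · simp [hik]
    · by_cases hc : c ≤ x i <;> simp [hik, hc]

/-- Dual upper one-coordinate estimate, from (V) and (I). -/
private lemma high1 (hf : Monotone f) (hv : CondV f) (hi : CondI f)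
    (x : Fin n → L) (k : Fin n) (c : L)
    (h1 : f (fun _ => ⊥) ≤ c) (h2 : c ≤ f (fun _ => ⊤)) :
    f (fun i => if i = k then c else x i) ≤ f (fun i => if i = k then ⊥ else x i) ⊔ c := by
  have hy := hv (fun i => if i = k then c else x i) c h1 h2
  rw [hy]
  refine sup_le ?_ ?_
  · refine le_sup_of_le_right ?_
    calc f (fun i => (if i = k then c else x i) ⊓ c) ≤ f (fun _ => c) :=
          hf fun i => inf_le_right
      _ = c := hi c h1 h2
  · refine le_sup_of_le_left (hf fun i => ?_)
    by_cases hik : i = k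
    · simp [hik]
    · by_cases hc : x i ≤ c <;> simp [hik, hc]

/-- Iterated version of `low1` over a finite set of coordinates. -/
private lemma lowT (hf : Monotone f) (hdi : DiagSubstPreservesInf f)
    (hvd : CondVDual f) (hi : CondI f) (x : Fin n → L) (c : L)
    (h1 : f (fun _ => ⊥) ≤ c) (h2 : c ≤ f (fun _ => ⊤)) :
    ∀ T : Finset (Fin n), f x ⊓ c ≤ f (fun i => if i ∈ T then x i ⊓ c else x i) := by
  intro T
  induction T using Finset.induction_on with
  | empty => simpa using inf_le_left
  | @insert k T hk ih =>
      have hdiag := hdi {i | ¬ i = k} (fun i => if i ∈ T then x i ⊓ c else x i)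
        ((fun i => if i ∈ T then x i ⊓ c else x i) k) c
      simp only [Set.mem_setOf_eq] at hdiag
      have eqA : (fun i => if (¬ i = k) then
            (if i ∈ T then x i ⊓ c else x i)
            else ((fun i => if i ∈ T then x i ⊓ c else x i) k)) =
          (fun i => if i ∈ T then x i ⊓ c else x i) := by
        funext i
        by_cases hik : i = k
        · subst hik; simp
        · simp [Set.mem_setOf_eq, hik]
      have eqB : (fun i => if i ∈ insert k T then x i ⊓ c else x i) =
          (fun i => if (¬ i = k) then
            (if i ∈ T then x i ⊓ c else x i)
            else ((fun i => if i ∈ T then x i ⊓ c else x i) k) ⊓ c) := by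
        funext i
        by_cases hik : i = k
        · subst hik
          simp [Set.mem_setOf_eq, Finset.mem_insert, hk]
        · simp [Set.mem_setOf_eq, hik, Finset.mem_insert]
      rw [eqB, hdiag, eqA]
      refine le_inf ih (le_trans (le_trans ?_ (low1 hf hvd hi
        (fun i => if i ∈ T then x i ⊓ c else x i) k c h1 h2)) (hf fun i => ?_))
      · refine le_inf ?_ inf_le_right
        refine le_trans ih (hf fun i => ?_)
        by_cases hik : i = k <;> simp [hik]
      · by_cases hik : i = k <;> simp [hik]

/-- Dual iterated version. -/
private lemma highT (hf : Monotone f) (hds : DiagSubstPreservesSup f)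
    (hv : CondV f) (hi : CondI f) (x : Fin n → L) (c : L)
    (h1 : f (fun _ => ⊥) ≤ c) (h2 : c ≤ f (fun _ => ⊤)) :
    ∀ T : Finset (Fin n), f (fun i => if i ∈ T then x i ⊔ c else x i) ≤ f x ⊔ c := by
  intro T
  induction T using Finset.induction_on with
  | empty => simpa using le_sup_left
  | @insert k T hk ih =>
      have hdiag := hds {i | ¬ i = k} (fun i => if i ∈ T then x i ⊔ c else x i)
        ((fun i => if i ∈ T then x i ⊔ c else x i) k) c
      simp only [Set.mem_setOf_eq] at hdiag
      have eqA : (fun i => if (¬ i = k) then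
            (if i ∈ T then x i ⊔ c else x i)
            else ((fun i => if i ∈ T then x i ⊔ c else x i) k)) =
          (fun i => if i ∈ T then x i ⊔ c else x i) := by
        funext i
        by_cases hik : i = k
        · subst hik; simp
        · simp [Set.mem_setOf_eq, hik]
      have eqB : (fun i => if i ∈ insert k T then x i ⊔ c else x i) =
          (fun i => if (¬ i = k) then
            (if i ∈ T then x i ⊔ c else x i)
            else ((fun i => if i ∈ T then x i ⊔ c else x i) k) ⊔ c) := by
        funext i
        by_cases hik : i = k
        · subst hik
          simp [Set.mem_setOf_eq, Finset.mem_insert, hk]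
        · simp [Set.mem_setOf_eq, hik, Finset.mem_insert]
      rw [eqB, hdiag, eqA]
      refine sup_le ih (le_trans (hf fun i => ?_) (le_trans (high1 hf hv hi
        (fun i => if i ∈ T then x i ⊔ c else x i) k c h1 h2) ?_))
      · by_cases hik : i = k <;> simp [hik]
      · refine sup_le ?_ le_sup_right
        refine le_trans (hf fun i => ?_) ih
        by_cases hik : i = k <;> simp [hik]

private lemma condH_of (hf : Monotone f) (hdi : DiagSubstPreservesInf f)
    (hvd : CondVDual f) (hi : CondI f) : CondH f := by
  intro x c h1 h2
  apply le_antisymm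
  · refine le_inf (hf fun i => inf_le_left) ?_
    refine le_trans (hf fun i => inf_le_right) (le_of_eq (hi c h1 h2))
  · have := lowT hf hdi hvd hi x c h1 h2 Finset.univ
    simpa using this

private lemma condHDual_of (hf : Monotone f) (hds : DiagSubstPreservesSup f)
    (hv : CondV f) (hi : CondI f) : CondHDual f := by
  intro x c h1 h2
  apply le_antisymm
  · have := highT hf hds hv hi x c h1 h2 Finset.univ
    simpa using this
  · refine sup_le (hf fun i => le_sup_left) ?_
    refine le_trans (le_of_eq (hi c h1 h2).symm) (hf fun i => le_sup_right)

/-- Median decomposability from (H) and (H*). -/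
private lemma medDecomp (hf : Monotone f) (hH : CondH f) (hH' : CondHDual f)
    (x : Fin n → L) (k : Fin n) :
    f x = f (fun i => if i = k then ⊥ else x i) ⊔
      (x k ⊓ f (fun i => if i = k then ⊤ else x i)) := by
  set a := f (fun i => if i = k then ⊥ else x i) with ha
  set b := f (fun i => if i = k then ⊤ else x i) with hb
  set t := x k with ht
  set fb := f (fun _ => ⊥) with hfb
  set ft := f (fun _ => ⊤) with hft
  have hfbft : fb ≤ ft := hf fun i => bot_le
  have hfba : fb ≤ a := hf fun i => bot_le
  have haft : a ≤ ft := hf fun i => le_top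
  have hbft : b ≤ ft := hf fun i => le_top
  have hab : a ≤ b := hf fun i => by by_cases hik : i = k <;> simp [hik]
  have hxb : f x ≤ b := hf fun i => by by_cases hik : i = k <;> simp [hik]
  have hax : a ≤ f x := hf fun i => by by_cases hik : i = k <;> simp [hik]
  have upper : f x ≤ a ⊔ t := by
    have hc1 : fb ≤ (t ⊔ a) ⊓ ft := le_inf (le_trans hfba le_sup_right) hfbft
    have hc2 : (t ⊔ a) ⊓ ft ≤ ft := inf_le_right
    have s1 : f x = f (fun i => x i ⊓ ft) := by
      rw [hH x ft hfbft le_rfl]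
      exact (inf_eq_left.mpr (hf fun i => le_top)).symm
    have s3 : f (fun i => (if i = k then ⊥ else x i) ⊔ (t ⊔ a) ⊓ ft) =
        a ⊔ (t ⊔ a) ⊓ ft := hH' (fun i => if i = k then ⊥ else x i) _ hc1 hc2
    have s2 : f (fun i => x i ⊓ ft) ≤
        f (fun i => (if i = k then ⊥ else x i) ⊔ (t ⊔ a) ⊓ ft) := by
      refine hf fun i => ?_
      by_cases hik : i = k
      · subst hik
        rw [if_pos rfl, bot_sup_eq]
        exact le_inf (inf_le_of_left_le le_sup_left) inf_le_right
      · simp only [if_neg hik]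
        exact le_sup_of_le_left inf_le_left
    calc f x = f (fun i => x i ⊓ ft) := s1
      _ ≤ a ⊔ (t ⊔ a) ⊓ ft := by rw [← s3]; exact s2
      _ ≤ a ⊔ t := sup_le le_sup_left
          (inf_le_of_left_le (sup_le le_sup_right le_sup_left))
  have lower : t ⊓ b ≤ f x := by
    have hc1 : fb ≤ (t ⊓ b) ⊔ fb := le_sup_right
    have hc2 : (t ⊓ b) ⊔ fb ≤ ft := sup_le (le_trans inf_le_right hbft) hfbft
    have s1 : f x = f (fun i => x i ⊔ fb) := by
      rw [hH' x fb le_rfl hfbft]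
      exact (sup_eq_left.mpr (hf fun i => bot_le)).symm
    have s3 : f (fun i => (if i = k then ⊤ else x i) ⊓ ((t ⊓ b) ⊔ fb)) =
        b ⊓ ((t ⊓ b) ⊔ fb) := hH (fun i => if i = k then ⊤ else x i) _ hc1 hc2
    have s2 : f (fun i => (if i = k then ⊤ else x i) ⊓ ((t ⊓ b) ⊔ fb)) ≤
        f (fun i => x i ⊔ fb) := by
      refine hf fun i => ?_
      by_cases hik : i = k
      · subst hik
        rw [if_pos rfl, top_inf_eq]
        exact sup_le_sup inf_le_left le_rfl
      · simp only [if_neg hik]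
        exact le_sup_of_le_left inf_le_left
    calc t ⊓ b ≤ b ⊓ ((t ⊓ b) ⊔ fb) := le_inf inf_le_right le_sup_left
      _ = f (fun i => (if i = k then ⊤ else x i) ⊓ ((t ⊓ b) ⊔ fb)) := s3.symm
      _ ≤ f (fun i => x i ⊔ fb) := s2
      _ = f x := s1.symm
  apply le_antisymm
  · calc f x ≤ (a ⊔ t) ⊓ b := le_inf upper hxb
      _ = (a ⊓ b) ⊔ (t ⊓ b) := inf_sup_right _ _ _
      _ = a ⊔ (t ⊓ b) := by rw [inf_eq_left.mpr hab]
  · exact sup_le hax lower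

end Bwd


section Aux

open Finset

variable [DistribLattice L] [BoundedOrder L] {n : ℕ}

private lemma LPmono {f : (Fin n → L) → L} (h : IsLatticePolynomial f) : Monotone f := by
  induction h with
  | proj k => exact fun x y hxy => hxy k
  | const c => exact monotone_const
  | inf h1 h2 ih1 ih2 => exact fun x y hxy => inf_le_inf (ih1 hxy) (ih2 hxy)
  | sup h1 h2 ih1 ih2 => exact fun x y hxy => sup_le_sup (ih1 hxy) (ih2 hxy)

/-- Auxiliary identity: meet of two "median form" functions. -/
private lemma medInfEq (z : L) {a1 b1 a2 b2 : L} (h1 : a1 ≤ b1) (h2 : a2 ≤ b2) :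
    ((z ⊓ b1) ⊔ a1) ⊓ ((z ⊓ b2) ⊔ a2) = (z ⊓ (b1 ⊓ b2)) ⊔ (a1 ⊓ a2) := by
  apply le_antisymm
  · rw [inf_sup_right, inf_sup_left, inf_sup_left]
    refine sup_le (sup_le ?_ ?_) (sup_le ?_ ?_)
    · exact le_sup_of_le_left (le_inf (inf_le_of_left_le inf_le_left)
        (le_inf (inf_le_of_left_le inf_le_right) (inf_le_of_right_le inf_le_right)))
    · exact le_sup_of_le_left (le_inf (inf_le_of_left_le inf_le_left)
        (le_inf (inf_le_of_left_le inf_le_right) (inf_le_of_right_le h2)))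
    · exact le_sup_of_le_left (le_inf (inf_le_of_right_le inf_le_left)
        (le_inf (inf_le_of_left_le h1) (inf_le_of_right_le inf_le_right)))
    · exact le_sup_right
  · refine sup_le (le_inf ?_ ?_) (le_inf ?_ ?_)
    · exact le_sup_of_le_left (inf_le_inf_left z inf_le_left)
    · exact le_sup_of_le_left (inf_le_inf_left z inf_le_right)
    · exact le_sup_of_le_right inf_le_left
    · exact le_sup_of_le_right inf_le_right

/-- Auxiliary identity: join of two "median form" functions. -/
private lemma medSupEq (z : L) (a1 b1 a2 b2 : L) :
    ((z ⊓ b1) ⊔ a1) ⊔ ((z ⊓ b2) ⊔ a2) = (z ⊓ (b1 ⊔ b2)) ⊔ (a1 ⊔ a2) := by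
  rw [inf_sup_left]
  apply le_antisymm
  · refine sup_le (sup_le ?_ ?_) (sup_le ?_ ?_)
    · exact le_sup_of_le_left le_sup_left
    · exact le_sup_of_le_right le_sup_left
    · exact le_sup_of_le_left le_sup_right
    · exact le_sup_of_le_right le_sup_right
  · refine sup_le (sup_le ?_ ?_) (sup_le ?_ ?_)
    · exact le_sup_of_le_left le_sup_left
    · exact le_sup_of_le_right le_sup_left
    · exact le_sup_of_le_left le_sup_right
    · exact le_sup_of_le_right le_sup_right

/-- A "median form" function preserves binary meets. -/
private lemma medPresInf (x y A B : L) :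
    ((x ⊓ y) ⊓ B) ⊔ A = ((x ⊓ B) ⊔ A) ⊓ ((y ⊓ B) ⊔ A) := by
  rw [sup_comm ((x:L) ⊓ B) A, sup_comm ((y:L) ⊓ B) A, ← sup_inf_left, sup_comm]
  congr 1
  apply le_antisymm
  · exact le_inf (inf_le_inf inf_le_left le_rfl) (inf_le_inf inf_le_right le_rfl)
  · exact le_inf (le_inf (inf_le_of_left_le inf_le_left) (inf_le_of_right_le inf_le_left))
      (inf_le_of_left_le inf_le_right)

/-- A "median form" function preserves binary joins. -/
private lemma medPresSup (x y A B : L) :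
    ((x ⊔ y) ⊓ B) ⊔ A = ((x ⊓ B) ⊔ A) ⊔ ((y ⊓ B) ⊔ A) := by
  rw [inf_sup_right]
  apply le_antisymm
  · refine sup_le (sup_le ?_ ?_) ?_
    · exact le_sup_of_le_left le_sup_left
    · exact le_sup_of_le_right le_sup_left
    · exact le_sup_of_le_left le_sup_right
  · refine sup_le (sup_le ?_ ?_) (sup_le ?_ ?_)
    · exact le_sup_of_le_left le_sup_left
    · exact le_sup_right
    · exact le_sup_of_le_left le_sup_right
    · exact le_sup_right

/-- Every substituted diagonal of a polynomial function has median form. -/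
private lemma LPmedForm {f : (Fin n → L) → L} (h : IsLatticePolynomial f)
    (K : Set (Fin n)) (a : Fin n → L) :
    ∃ A B : L, A ≤ B ∧
      ∀ z : L, f (fun i => if i ∈ K then a i else z) = (z ⊓ B) ⊔ A := by
  induction h with
  | proj k =>
      by_cases hk : k ∈ K
      · refine ⟨a k, a k, le_rfl, fun z => ?_⟩
        show (if k ∈ K then a k else z) = (z ⊓ a k) ⊔ a k
        rw [if_pos hk, inf_comm, sup_comm, sup_inf_self]
      · refine ⟨⊥, ⊤, bot_le, fun z => ?_⟩
        show (if k ∈ K then a k else z) = (z ⊓ ⊤) ⊔ ⊥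
        rw [if_neg hk, inf_top_eq, sup_bot_eq]
  | const c =>
      refine ⟨c, c, le_rfl, fun z => ?_⟩
      show c = (z ⊓ c) ⊔ c
      rw [inf_comm, sup_comm, sup_inf_self]
  | inf h1 h2 ih1 ih2 =>
      obtain ⟨A1, B1, hle1, e1⟩ := ih1
      obtain ⟨A2, B2, hle2, e2⟩ := ih2
      refine ⟨A1 ⊓ A2, B1 ⊓ B2, inf_le_inf hle1 hle2, fun z => ?_⟩
      show _ ⊓ _ = _
      rw [e1 z, e2 z, medInfEq z hle1 hle2]
  | sup h1 h2 ih1 ih2 =>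
      obtain ⟨A1, B1, hle1, e1⟩ := ih1
      obtain ⟨A2, B2, hle2, e2⟩ := ih2
      refine ⟨A1 ⊔ A2, B1 ⊔ B2, sup_le_sup hle1 hle2, fun z => ?_⟩
      show _ ⊔ _ = _
      rw [e1 z, e2 z, medSupEq]

private lemma LPdiagInf {f : (Fin n → L) → L} (h : IsLatticePolynomial f) :
    DiagSubstPreservesInf f := by
  intro K a x y
  obtain ⟨A, B, _, e⟩ := LPmedForm h K a
  rw [e x, e y, e (x ⊓ y), medPresInf]

private lemma LPdiagSup {f : (Fin n → L) → L} (h : IsLatticePolynomial f) :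
    DiagSubstPreservesSup f := by
  intro K a x y
  obtain ⟨A, B, _, e⟩ := LPmedForm h K a
  rw [e x, e y, e (x ⊔ y), medPresSup]

private lemma LPcondI {f : (Fin n → L) → L} (h : IsLatticePolynomial f) : CondI f := by
  obtain ⟨A, B, hAB, e⟩ := LPmedForm h (∅ : Set (Fin n)) (fun _ => ⊥)
  have e' : ∀ z : L, f (fun _ => z) = (z ⊓ B) ⊔ A := by
    intro z
    have := e z
    simpa using this
  intro c h1 h2
  have hA : f (fun _ => ⊥) = A := by rw [e' ⊥]; simp
  have hB : f (fun _ => ⊤) = B := by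
    rw [e' ⊤]; simp [sup_eq_left.mpr hAB]
  rw [e' c]
  rw [hB] at h2
  rw [hA] at h1
  rw [inf_eq_left.mpr h2, sup_eq_left.mpr h1]

/-- Goodstein: a polynomial function equals its disjunctive normal form. -/
private lemma LPdnf {f : (Fin n → L) → L} (h : IsLatticePolynomial f) (x : Fin n → L) :
    f x = (Finset.univ : Finset (Finset (Fin n))).sup
      (fun S => f (fun i => if i ∈ S then ⊤ else ⊥) ⊓ S.inf x) := by
  induction h with
  | proj k =>
      apply le_antisymm
      · refine Finset.le_sup_of_le (Finset.mem_univ ({k} : Finset (Fin n))) ?_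
        simp
      · refine Finset.sup_le fun S _ => ?_
        by_cases hk : k ∈ S
        · exact inf_le_of_right_le (Finset.inf_le hk)
        · simp [hk]
  | const c =>
      apply le_antisymm
      · refine Finset.le_sup_of_le (Finset.mem_univ (∅ : Finset (Fin n))) ?_
        simp
      · exact Finset.sup_le fun S _ => inf_le_left
  | @inf g h' h1 h2 ih1 ih2 =>
      show g x ⊓ h' x = _
      apply le_antisymm
      · rw [ih1, ih2, Finset.sup_inf_distrib_right]
        refine Finset.sup_le fun S _ => ?_
        rw [Finset.sup_inf_distrib_left]
        refine Finset.sup_le fun T _ => ?_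
        refine Finset.le_sup_of_le (Finset.mem_univ (S ∪ T)) ?_
        show g _ ⊓ S.inf x ⊓ (h' _ ⊓ T.inf x) ≤ g _ ⊓ h' _ ⊓ (S ∪ T).inf x
        have hgS : g (fun i => if i ∈ S then ⊤ else ⊥) ≤
            g (fun i => if i ∈ S ∪ T then ⊤ else ⊥) := by
          refine LPmono h1 fun i => ?_
          by_cases hi : i ∈ S
          · simp [hi, Finset.mem_union.mpr (Or.inl hi)]
          · simp [hi]
        have hhT : h' (fun i => if i ∈ T then ⊤ else ⊥) ≤
            h' (fun i => if i ∈ S ∪ T then ⊤ else ⊥) := by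
          refine LPmono h2 fun i => ?_
          by_cases hi : i ∈ T
          · simp [hi, Finset.mem_union.mpr (Or.inr hi)]
          · simp [hi]
        rw [Finset.inf_union]
        refine le_inf (le_inf ?_ ?_) ?_
        · exact inf_le_of_left_le (inf_le_of_left_le hgS)
        · exact inf_le_of_right_le (inf_le_of_left_le hhT)
        · exact inf_le_inf inf_le_right inf_le_right
      · refine Finset.sup_le fun S _ => ?_
        show g _ ⊓ h' _ ⊓ S.inf x ≤ g x ⊓ h' x
        refine le_inf ?_ ?_
        · rw [ih1]
          refine Finset.le_sup_of_le (Finset.mem_univ S) ?_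
          exact inf_le_inf (inf_le_left) le_rfl
        · rw [ih2]
          refine Finset.le_sup_of_le (Finset.mem_univ S) ?_
          exact inf_le_inf (inf_le_right) le_rfl
  | @sup g h' h1 h2 ih1 ih2 =>
      show g x ⊔ h' x = _
      apply le_antisymm
      · refine sup_le ?_ ?_
        · rw [ih1]
          refine Finset.sup_le fun S _ => Finset.le_sup_of_le (Finset.mem_univ S) ?_
          exact inf_le_inf le_sup_left le_rfl
        · rw [ih2]
          refine Finset.sup_le fun S _ => Finset.le_sup_of_le (Finset.mem_univ S) ?_
          exact inf_le_inf le_sup_right le_rfl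
      · refine Finset.sup_le fun S _ => ?_
        show (g _ ⊔ h' _) ⊓ S.inf x ≤ g x ⊔ h' x
        rw [inf_sup_right]
        refine sup_le ?_ ?_
        · refine le_sup_of_le_left ?_
          rw [ih1]; exact Finset.le_sup_of_le (Finset.mem_univ S) le_rfl
        · refine le_sup_of_le_right ?_
          rw [ih2]; exact Finset.le_sup_of_le (Finset.mem_univ S) le_rfl

/-- Each DNF term is below the polynomial function. -/
private lemma LPtermLe {f : (Fin n → L) → L} (h : IsLatticePolynomial f)
    (S : Finset (Fin n)) (y : Fin n → L) :
    f (fun i => if i ∈ S then ⊤ else ⊥) ⊓ S.inf y ≤ f y := by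
  rw [LPdnf h y]
  apply Finset.le_sup (Finset.mem_univ S)

private lemma LPcondH {f : (Fin n → L) → L} (h : IsLatticePolynomial f) : CondH f := by
  intro x c h1 h2
  apply le_antisymm
  · refine le_inf (LPmono h fun i => inf_le_left) ?_
    refine le_trans (LPmono h fun i => inf_le_right) ?_
    exact le_of_eq (LPcondI h c h1 h2)
  · rw [LPdnf h x, Finset.sup_inf_distrib_right]
    refine Finset.sup_le fun S _ => ?_
    refine le_trans ?_ (LPtermLe h S (fun i => x i ⊓ c))
    rw [inf_assoc]
    refine inf_le_inf_left _ ?_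
    refine Finset.le_inf fun i hi => ?_
    exact inf_le_inf (Finset.inf_le hi) le_rfl

private lemma LPcondHDual {f : (Fin n → L) → L} (h : IsLatticePolynomial f) :
    CondHDual f := by
  intro x c h1 h2
  apply le_antisymm
  · rw [LPdnf h (fun i => x i ⊔ c)]
    refine Finset.sup_le fun S _ => ?_
    have hdist : S.inf (fun i => x i ⊔ c) = S.inf x ⊔ c := by
      rw [sup_comm (S.inf x) c, Finset.inf_sup_distrib_left]
      refine Finset.inf_congr rfl fun i _ => sup_comm (x i) c
    rw [hdist, inf_sup_left]
    refine sup_le ?_ (inf_le_of_right_le le_sup_right)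
    exact le_sup_of_le_left (LPtermLe h S x)
  · refine sup_le (LPmono h fun i => le_sup_left) ?_
    refine le_trans (le_of_eq (LPcondI h c h1 h2).symm) ?_
    exact LPmono h fun i => le_sup_right

private lemma LPcondV {f : (Fin n → L) → L} (h : IsLatticePolynomial f) : CondV f := by
  intro x c h1 h2
  have hxc : (fun i => if x i ≤ c then ⊥ else x i) ≤ x := by
    intro i
    by_cases hi : x i ≤ c
    · simp [hi]
    · simp [hi]
  have key : f x ≤ c ⊔ f (fun i => if x i ≤ c then ⊥ else x i) := by
    rw [LPdnf h x]
    refine Finset.sup_le fun S _ => ?_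
    by_cases hS : ∃ i ∈ S, x i ≤ c
    · obtain ⟨i, hi, hic⟩ := hS
      exact le_sup_of_le_left (le_trans (inf_le_of_right_le (Finset.inf_le hi)) hic)
    · push_neg at hS
      refine le_sup_of_le_right ?_
      refine le_trans ?_ (LPtermLe h S (fun i => if x i ≤ c then ⊥ else x i))
      refine inf_le_inf le_rfl ?_
      refine Finset.le_inf fun i hi => ?_
      rw [if_neg (hS i hi)]
      exact Finset.inf_le hi
  have h3 : f (fun i => if x i ≤ c then ⊥ else x i) ≤ f x := LPmono h hxc
  calc f x = f x ⊓ (c ⊔ f (fun i => if x i ≤ c then ⊥ else x i)) := (inf_eq_left.mpr key).symm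
    _ = (f x ⊓ c) ⊔ (f x ⊓ f (fun i => if x i ≤ c then ⊥ else x i)) := inf_sup_left _ _ _
    _ = (f fun i => x i ⊓ c) ⊔ (f fun i => if x i ≤ c then ⊥ else x i) := by
        rw [LPcondH h x c h1 h2, inf_eq_right.mpr h3]

private lemma LPcondVDual {f : (Fin n → L) → L} (h : IsLatticePolynomial f) :
    CondVDual f := by
  intro x c h1 h2
  have hxc : x ≤ (fun i => if c ≤ x i then ⊤ else x i) := by
    intro i
    by_cases hi : c ≤ x i
    · simp [hi]
    · simp [hi]
  have key : c ⊓ f (fun i => if c ≤ x i then ⊤ else x i) ≤ f x := by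
    rw [LPdnf h (fun i => if c ≤ x i then ⊤ else x i), Finset.sup_inf_distrib_left]
    refine Finset.sup_le fun S _ => ?_
    refine le_trans ?_ (LPtermLe h S x)
    have hinner : c ⊓ S.inf (fun i => if c ≤ x i then ⊤ else x i) ≤ S.inf x := by
      refine Finset.le_inf fun i hi => ?_
      by_cases hci : c ≤ x i
      · exact inf_le_of_left_le hci
      · refine le_trans (inf_le_of_right_le (Finset.inf_le hi)) ?_
        rw [if_neg hci]
    calc c ⊓ (f (fun i => if i ∈ S then ⊤ else ⊥) ⊓
          S.inf (fun i => if c ≤ x i then ⊤ else x i))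
        = f (fun i => if i ∈ S then ⊤ else ⊥) ⊓
          (c ⊓ S.inf (fun i => if c ≤ x i then ⊤ else x i)) := by
          rw [← inf_assoc, inf_comm c, inf_assoc]
      _ ≤ _ ⊓ S.inf x := inf_le_inf_left _ hinner
  have h3 : f x ≤ f (fun i => if c ≤ x i then ⊤ else x i) := LPmono h hxc
  calc f x = f x ⊔ (c ⊓ f (fun i => if c ≤ x i then ⊤ else x i)) := (sup_eq_left.mpr key).symm
    _ = (f x ⊔ c) ⊓ (f x ⊔ f (fun i => if c ≤ x i then ⊤ else x i)) := sup_inf_left _ _ _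
    _ = (f fun i => x i ⊔ c) ⊓ (f fun i => if c ≤ x i then ⊤ else x i) := by
        rw [LPcondHDual h x c h1 h2, sup_eq_right.mpr h3]

end Aux


section Assemble

open Finset

variable [DistribLattice L] [BoundedOrder L] {n : ℕ} {f : (Fin n → L) → L}

private lemma supSplit {ι : Type*} (s : Finset ι) (F G : ι → L) :
    s.sup (fun i => F i ⊔ G i) = s.sup F ⊔ s.sup G := by
  apply le_antisymm
  · exact Finset.sup_le fun i hi => sup_le_sup (Finset.le_sup hi) (Finset.le_sup hi)
  · exact sup_le (Finset.sup_le fun i hi => Finset.le_sup_of_le hi le_sup_left)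
      (Finset.sup_le fun i hi => Finset.le_sup_of_le hi le_sup_right)

private lemma supPoly {ι : Type*} (s : Finset ι) (g : ι → (Fin n → L) → L)
    (hg : ∀ i ∈ s, IsLatticePolynomial (g i)) :
    IsLatticePolynomial (fun x => s.sup (fun i => g i x)) := by
  classical
  induction s using Finset.induction_on with
  | empty => simpa using IsLatticePolynomial.const (⊥ : L)
  | @insert a s ha ih =>
      simp only [Finset.sup_insert]
      exact IsLatticePolynomial.sup (hg a (Finset.mem_insert_self a s))
        (ih fun i hi => hg i (Finset.mem_insert_of_mem hi))

private lemma infProjPoly (S : Finset (Fin n)) :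
    IsLatticePolynomial (fun x : Fin n → L => S.inf x) := by
  classical
  induction S using Finset.induction_on with
  | empty => simpa using IsLatticePolynomial.const (⊤ : L)
  | @insert a s ha ih =>
      simp only [Finset.inf_insert]
      exact IsLatticePolynomial.inf (IsLatticePolynomial.proj a) ih

private lemma dnfPoly (a : Finset (Fin n) → L) :
    IsLatticePolynomial (fun x : Fin n → L =>
      (Finset.univ : Finset (Finset (Fin n))).sup (fun S => a S ⊓ S.inf x)) := by
  refine supPoly _ (fun S x => a S ⊓ S.inf x) fun S _ => ?_
  exact IsLatticePolynomial.inf (IsLatticePolynomial.const (a S)) (infProjPoly S)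

/-- The DNF representation, obtained by iterating median decomposability. -/
private lemma dnfEqOfMed (hf : Monotone f) (hH : CondH f) (hH' : CondHDual f)
    (x : Fin n → L) :
    f x = (Finset.univ : Finset (Finset (Fin n))).sup
      (fun S => f (fun i => if i ∈ S then ⊤ else ⊥) ⊓ S.inf x) := by
  have key : ∀ T : Finset (Fin n), f x = T.powerset.sup
      (fun S => f (fun i => if i ∈ S then ⊤ else if i ∈ T then ⊥ else x i) ⊓ S.inf x) := by
    intro T
    induction T using Finset.induction_on with
    | empty =>
        rw [Finset.powerset_empty, Finset.sup_singleton]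
        have hx : (fun i => if i ∈ (∅ : Finset (Fin n)) then ⊤
            else if i ∈ (∅ : Finset (Fin n)) then ⊥ else x i) = x := by
          funext i; simp
        rw [hx]
        simp
    | @insert k T hk ih =>
        have hterm : ∀ S ∈ T.powerset,
            f (fun i => if i ∈ S then ⊤ else if i ∈ T then ⊥ else x i) ⊓ S.inf x =
            (f (fun i => if i ∈ S then ⊤ else if i ∈ insert k T then ⊥ else x i) ⊓
              S.inf x) ⊔
            (f (fun i => if i ∈ insert k S then ⊤ else if i ∈ insert k T then ⊥ else x i) ⊓
              (insert k S).inf x) := by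
          intro S hS
          have hST : S ⊆ T := Finset.mem_powerset.mp hS
          have hkS : k ∉ S := fun h => hk (hST h)
          have hmd := medDecomp hf hH hH'
            (fun i => if i ∈ S then ⊤ else if i ∈ T then ⊥ else x i) k
          have ebot : (fun i => if i = k then ⊥
              else if i ∈ S then ⊤ else if i ∈ T then ⊥ else x i) =
              (fun i => if i ∈ S then ⊤ else if i ∈ insert k T then ⊥ else x i) := by
            funext i
            by_cases hik : i = k
            · subst hik; simp [hkS]
            · simp [hik, Finset.mem_insert]
          have etop : (fun i => if i = k then ⊤
              else if i ∈ S then ⊤ else if i ∈ T then ⊥ else x i) =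
              (fun i => if i ∈ insert k S then ⊤ else if i ∈ insert k T then ⊥ else x i) := by
            funext i
            by_cases hik : i = k
            · subst hik; simp
            · simp [hik, Finset.mem_insert]
          have eyk : (if k ∈ S then (⊤ : L) else if k ∈ T then ⊥ else x k) = x k := by
            simp [hkS, hk]
          rw [ebot, etop] at hmd
          rw [hmd, eyk, inf_sup_right, Finset.inf_insert]
          congr 1
          rw [← inf_assoc, inf_comm (x k), inf_assoc]
        calc f x = T.powerset.sup
              (fun S => f (fun i => if i ∈ S then ⊤ else if i ∈ T then ⊥ else x i) ⊓
                S.inf x) := ih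
          _ = T.powerset.sup (fun S =>
              (f (fun i => if i ∈ S then ⊤ else if i ∈ insert k T then ⊥ else x i) ⊓
                S.inf x) ⊔
              (f (fun i => if i ∈ insert k S then ⊤ else if i ∈ insert k T then ⊥ else x i) ⊓
                (insert k S).inf x)) := Finset.sup_congr rfl hterm
          _ = T.powerset.sup (fun S =>
              f (fun i => if i ∈ S then ⊤ else if i ∈ insert k T then ⊥ else x i) ⊓
                S.inf x) ⊔
              T.powerset.sup (fun S =>
              f (fun i => if i ∈ insert k S then ⊤ else if i ∈ insert k T then ⊥ else x i) ⊓
                (insert k S).inf x) := supSplit _ _ _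
          _ = (insert k T).powerset.sup
              (fun S => f (fun i => if i ∈ S then ⊤ else if i ∈ insert k T then ⊥ else x i) ⊓
                S.inf x) := by
              rw [Finset.powerset_insert, Finset.sup_union, Finset.sup_image]
              rfl
  have h2 := key Finset.univ
  rw [Finset.powerset_univ] at h2
  rw [h2]
  refine Finset.sup_congr rfl fun S _ => ?_
  have hv : (fun i => if i ∈ S then (⊤ : L) else if i ∈ (Finset.univ : Finset (Fin n))
      then ⊥ else x i) = (fun i => if i ∈ S then ⊤ else ⊥) := by
    funext i
    by_cases hi : i ∈ S <;> simp [hi]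
  rw [hv]

end Assemble

/-- An order-preserving function `f : Lⁿ → L` (`n ≥ 1`) is a lattice
polynomial function iff for every function `g` obtained from `f` by substituting
constants for variables (including `f` itself), `δ_g` preserves `∧` and `∨`, and `f`
satisfies conditions (V), (V*), and (I). -/
theorem isLatticePolynomial_iff_diag_condV_condVDual_condI
    {L : Type*} [DistribLattice L] [BoundedOrder L] {n : ℕ} (hn : 1 ≤ n)
    (f : (Fin n → L) → L) (hf : Monotone f) :
    IsLatticePolynomial f ↔
      (DiagSubstPreservesInf f ∧ DiagSubstPreservesSup f) ∧
      CondV f ∧ CondVDual f ∧ CondI f := by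
  constructor
  · intro h
    exact ⟨⟨LPdiagInf h, LPdiagSup h⟩, LPcondV h, LPcondVDual h, LPcondI h⟩
  · rintro ⟨⟨hdi, hds⟩, hv, hvd, hi⟩
    have hH := condH_of hf hdi hvd hi
    have hH' := condHDual_of hf hds hv hi
    have hdnf : f = fun x => (Finset.univ : Finset (Finset (Fin n))).sup
        (fun S => f (fun i => if i ∈ S then ⊤ else ⊥) ⊓ S.inf x) :=
      funext (dnfEqOfMed hf hH hH')
    have poly := dnfPoly (fun S : Finset (Fin n) => f (fun i => if i ∈ S then ⊤ else ⊥))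
    rwa [← hdnf] at poly
end

section
/- Let L be a bounded distributive lattice and let f, g : Lⁿ → L be lattice polynomial functions. If f(x) = g(x) for every x ∈ {0,1}ⁿ (i.e., every vector all of whose components equal the bottom element 0 or the top element 1), then f = g. -/
open Classical

variable {L : Type*}

section Aux
variable [DistribLattice L] [BoundedOrder L] {n : ℕ}

lemma IsLatticePolynomial.monotone {f : (Fin n → L) → L} (hf : IsLatticePolynomial f) :
    Monotone f := by
  induction hf with
  | proj k => exact fun a b hab => hab k
  | const c => exact monotone_const
  | inf hf hg ihf ihg => exact fun a b hab => inf_le_inf (ihf hab) (ihg hab)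
  | sup hf hg ihf ihg => exact fun a b hab => sup_le_sup (ihf hab) (ihg hab)

/-- The 0/1 vector with support `S`. -/
def boolVec (S : Finset (Fin n)) : Fin n → L := fun i => if i ∈ S then ⊤ else ⊥

lemma boolVec_mono {S T : Finset (Fin n)} (hST : S ⊆ T) :
    (boolVec S : Fin n → L) ≤ boolVec T := by
  intro i
  by_cases hi : i ∈ S
  · simp [boolVec, hi, hST hi]
  · simp [boolVec, hi]

lemma dnf {f : (Fin n → L) → L} (hf : IsLatticePolynomial f) (x : Fin n → L) :
    f x = (Finset.univ : Finset (Finset (Fin n))).sup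
      (fun S => f (boolVec S) ⊓ S.inf x) := by
  induction hf with
  | proj k =>
      apply le_antisymm
      · have h1 : x k ≤ boolVec ({k} : Finset (Fin n)) k ⊓ ({k} : Finset (Fin n)).inf x := by
          simp [boolVec]
        exact h1.trans (Finset.le_sup (f := fun S : Finset (Fin n) => boolVec S k ⊓ S.inf x)
          (Finset.mem_univ _))
      · apply Finset.sup_le
        intro S _
        by_cases hk : k ∈ S
        · exact inf_le_right.trans (Finset.inf_le hk)
        · simp [boolVec, hk]
  | const c =>
      apply le_antisymm
      · have h1 : c ≤ c ⊓ (∅ : Finset (Fin n)).inf x := by simp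
        exact h1.trans (Finset.le_sup (f := fun S : Finset (Fin n) => c ⊓ S.inf x)
          (Finset.mem_univ _))
      · exact Finset.sup_le fun S _ => inf_le_left
  | @inf f' g' hf' hg' ihf ihg =>
      show f' x ⊓ g' x = Finset.univ.sup fun S => (f' (boolVec S) ⊓ g' (boolVec S)) ⊓ S.inf x
      apply le_antisymm
      · rw [ihf, ihg, Finset.sup_inf_distrib_right]
        apply Finset.sup_le
        intro S _
        rw [Finset.sup_inf_distrib_left]
        apply Finset.sup_le
        intro T _
        have h1 : f' (boolVec S) ≤ f' (boolVec (S ∪ T)) :=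
          hf'.monotone (boolVec_mono Finset.subset_union_left)
        have h2 : g' (boolVec T) ≤ g' (boolVec (S ∪ T)) :=
          hg'.monotone (boolVec_mono Finset.subset_union_right)
        have h4 : (f' (boolVec S) ⊓ S.inf x) ⊓ (g' (boolVec T) ⊓ T.inf x) ≤
            (f' (boolVec (S ∪ T)) ⊓ g' (boolVec (S ∪ T))) ⊓ (S ∪ T).inf x := by
          rw [Finset.inf_union]
          refine le_inf (le_inf ?_ ?_) ?_
          · exact inf_le_left.trans (inf_le_left.trans h1)
          · exact inf_le_right.trans (inf_le_left.trans h2)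
          · exact inf_le_inf inf_le_right inf_le_right
        exact h4.trans (Finset.le_sup
          (f := fun S : Finset (Fin n) => (f' (boolVec S) ⊓ g' (boolVec S)) ⊓ S.inf x)
          (Finset.mem_univ _))
      · apply Finset.sup_le
        intro S _
        refine le_inf ?_ ?_
        · have h1 : (f' (boolVec S) ⊓ g' (boolVec S)) ⊓ S.inf x ≤ f' (boolVec S) ⊓ S.inf x :=
            inf_le_inf inf_le_left le_rfl
          rw [ihf]
          exact h1.trans (Finset.le_sup (f := fun S : Finset (Fin n) => f' (boolVec S) ⊓ S.inf x)
            (Finset.mem_univ _))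
        · have h1 : (f' (boolVec S) ⊓ g' (boolVec S)) ⊓ S.inf x ≤ g' (boolVec S) ⊓ S.inf x :=
            inf_le_inf inf_le_right le_rfl
          rw [ihg]
          exact h1.trans (Finset.le_sup (f := fun S : Finset (Fin n) => g' (boolVec S) ⊓ S.inf x)
            (Finset.mem_univ _))
  | @sup f' g' hf' hg' ihf ihg =>
      show f' x ⊔ g' x = Finset.univ.sup fun S => (f' (boolVec S) ⊔ g' (boolVec S)) ⊓ S.inf x
      have h1 : (fun S : Finset (Fin n) => (f' (boolVec S) ⊔ g' (boolVec S)) ⊓ S.inf x) =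
          fun S => (f' (boolVec S) ⊓ S.inf x) ⊔ (g' (boolVec S) ⊓ S.inf x) := by
        funext S; rw [inf_sup_right]
      rw [h1]
      have h2 : ((Finset.univ : Finset (Finset (Fin n))).sup
          fun S => (f' (boolVec S) ⊓ S.inf x) ⊔ (g' (boolVec S) ⊓ S.inf x)) =
          ((Finset.univ : Finset (Finset (Fin n))).sup fun S => f' (boolVec S) ⊓ S.inf x) ⊔
          ((Finset.univ : Finset (Finset (Fin n))).sup fun S => g' (boolVec S) ⊓ S.inf x) :=
        Finset.sup_sup
      rw [h2, ← ihf, ← ihg]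

end Aux
/-- A lattice polynomial function is uniquely determined by its
restriction to `{0,1}ⁿ`. -/
theorem polynomial_eq_of_eq_on_boolean_vectors
    {L : Type*} [DistribLattice L] [BoundedOrder L] {n : ℕ}
    (f g : (Fin n → L) → L)
    (hf : IsLatticePolynomial f) (hg : IsLatticePolynomial g)
    (h : ∀ x : Fin n → L, (∀ i, x i = ⊥ ∨ x i = ⊤) → f x = g x) :
    f = g := by
  funext x
  rw [dnf hf, dnf hg]
  apply Finset.sup_congr rfl
  intro S _
  congr 1
  apply h
  intro i
  by_cases hi : i ∈ S
  · right; simp [boolVec, hi]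
  · left; simp [boolVec, hi]
end
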